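/- Let p, q ∈ ℕ* and let φ : {γ ∈ ℝ̃ : γ ≥ 0} → ℝ̃ be the map sending γ to γ^{p/q}, i.e. φ(γ) is the unique nonnegative element ρ ∈ ℝ̃ with ρ^q = γ^p (which exists and is unique since ℝ̃ is real closed). If φ is weakly continuous, then q divides p (i.e. p/q ∈ ℕ). -/

import Mathlib

noncomputable section
open Classical

namespace Puiseux

/-- A Hahn series (exponents in `ℚ`, real coefficients) is a *Puiseux series* if its
support is contained in `(1/q)ℤ` for some integer `q ≥ 1`. -/
def IsPuiseux (x : HahnSeries ℚ ℝ) : Prop :=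
  ∃ q : ℕ, 0 < q ∧ ∀ r ∈ x.support, ∃ i : ℤ, r = (i : ℚ) / (q : ℚ)

private lemma div_trick (i : ℤ) {a b : ℕ} (ha : 0 < a) (hb : 0 < b) :
    ((i : ℚ) / (a : ℚ)) = (((i * b : ℤ) : ℚ) / ((a * b : ℕ) : ℚ)) := by
  push_cast
  rw [mul_div_mul_right _ _ (by exact_mod_cast hb.ne' : (b : ℚ) ≠ 0)]

/-- The field `ℝ̃` of real Puiseux series, as a subring of the Hahn series field. -/
def Rring : Subring (HahnSeries ℚ ℝ) where
  carrier := {x | IsPuiseux x}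
  zero_mem' := ⟨1, one_pos, by simp [HahnSeries.support_zero]⟩
  one_mem' := by
    refine ⟨1, one_pos, fun r hr => ⟨0, ?_⟩⟩
    have h1 : (1 : HahnSeries ℚ ℝ) = HahnSeries.single (0 : ℚ) (1 : ℝ) := rfl
    have := HahnSeries.support_single_subset (h1 ▸ hr)
    simp only [Set.mem_singleton_iff] at this
    simp [this]
  add_mem' := by
    rintro x y ⟨qx, hqx, hx⟩ ⟨qy, hqy, hy⟩
    refine ⟨qx * qy, Nat.mul_pos hqx hqy, fun r hr => ?_⟩
    have hr' : x.coeff r ≠ 0 ∨ y.coeff r ≠ 0 := by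
      by_contra h
      push_neg at h
      rw [HahnSeries.mem_support, HahnSeries.coeff_add, h.1, h.2, add_zero] at hr
      exact hr rfl
    rcases hr' with h | h
    · obtain ⟨i, hi⟩ := hx r ((x.mem_support r).2 h)
      exact ⟨i * qy, by rw [hi, div_trick i hqx hqy]⟩
    · obtain ⟨i, hi⟩ := hy r ((y.mem_support r).2 h)
      refine ⟨i * qx, ?_⟩
      have h1 : (qx : ℚ) ≠ 0 := by exact_mod_cast hqx.ne'
      have h2 : (qy : ℚ) ≠ 0 := by exact_mod_cast hqy.ne'
      rw [hi]
      field_simp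
      push_cast
      ring
  neg_mem' := by
    rintro x ⟨q, hq, hx⟩
    exact ⟨q, hq, fun r hr => hx r (by rwa [HahnSeries.support_neg] at hr)⟩
  mul_mem' := by
    rintro x y ⟨qx, hqx, hx⟩ ⟨qy, hqy, hy⟩
    refine ⟨qx * qy, Nat.mul_pos hqx hqy, fun r hr => ?_⟩
    obtain ⟨a, ha, b, hb, rfl⟩ := HahnSeries.support_mul_subset hr
    obtain ⟨i, hi⟩ := hx a ha
    obtain ⟨j, hj⟩ := hy b hb
    refine ⟨i * qy + j * qx, ?_⟩
    rw [hi, hj]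
    have h1 : (qx : ℚ) ≠ 0 := by exact_mod_cast hqx.ne'
    have h2 : (qy : ℚ) ≠ 0 := by exact_mod_cast hqy.ne'
    field_simp
    push_cast
    ring

/-- The type `ℝ̃` of real Puiseux series. -/
abbrev R : Type := Rring

/-- A Puiseux series is *positive* if it is nonzero and its leading coefficient
(the coefficient of the smallest exponent in its support) is positive. -/
def Pos (x : HahnSeries ℚ ℝ) : Prop :=
  ∃ r : ℚ, 0 < x.coeff r ∧ ∀ s : ℚ, s < r → x.coeff s = 0

/-- The order relation `<` on `ℝ̃`. -/
def plt (x y : R) : Prop := Pos ((y : HahnSeries ℚ ℝ) - (x : HahnSeries ℚ ℝ))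

/-- The order relation `≤` on `ℝ̃`. -/
def ple (x y : R) : Prop := x = y ∨ plt x y

/-- The `ℝ̃`-topology (order/interval topology) on `ℝ̃`: generated by open rays. -/
def ordT : TopologicalSpace R :=
  TopologicalSpace.generateFrom
    ({s | ∃ a : R, s = {x | plt a x}} ∪ {s | ∃ a : R, s = {x | plt x a}})

/-- The `ℝ̃`-topology on `ℝ̃ⁿ` : product of the order topologies. -/
def ordTn (ι : Type) : TopologicalSpace (ι → R) :=
  @Pi.topologicalSpace ι (fun _ => R) (fun _ => ordT)

/-- The product (coefficientwise) topology on `ℝ̃`, induced from `Π_{r ∈ ℚ} ℝ`. -/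
def coefT : TopologicalSpace R :=
  TopologicalSpace.induced (fun (x : R) (r : ℚ) => (x : HahnSeries ℚ ℝ).coeff r)
    Pi.topologicalSpace

/-- The product topology on `ℝ̃ⁿ`. -/
def coefTn (ι : Type) : TopologicalSpace (ι → R) :=
  @Pi.topologicalSpace ι (fun _ => R) (fun _ => coefT)

/-- `ℝ̃_{p,q}`: Puiseux series of the form `Σ_{i ≥ p} a_i t^{i/q}`. -/
def Rpq (p : ℤ) (q : ℕ) : Set R :=
  {x | ∀ r ∈ (x : HahnSeries ℚ ℝ).support, ∃ i : ℤ, p ≤ i ∧ r = (i : ℚ) / (q : ℚ)}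

/-- `ℝ̃`-semialgebraic subsets of `ℝ̃^ι`: the Boolean algebra generated by the
sets `{x | P(x) > 0}`, for `P` a polynomial with coefficients in `ℝ̃`. -/
inductive IsSA (ι : Type) : Set (ι → R) → Prop
  | basic (P : MvPolynomial ι R) : IsSA ι {x | plt 0 (MvPolynomial.eval x P)}
  | compl {s : Set (ι → R)} : IsSA ι s → IsSA ι sᶜ
  | union {s t : Set (ι → R)} : IsSA ι s → IsSA ι t → IsSA ι (s ∪ t)

/-- An `ℝ̃`-semialgebraic map `ℝ̃ⁿ → ℝ̃ᵐ` : its graph is `ℝ̃`-semialgebraic. -/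
def IsSAMap {n m : ℕ} (φ : (Fin n → R) → (Fin m → R)) : Prop :=
  IsSA (Fin n ⊕ Fin m) {z | (fun j => z (Sum.inr j)) = φ (fun i => z (Sum.inl i))}

/-- An `ℝ̃`-semialgebraic function `ℝ̃ⁿ → ℝ̃` : its graph is `ℝ̃`-semialgebraic. -/
def IsSAFun {n : ℕ} (φ : (Fin n → R) → R) : Prop :=
  IsSA (Option (Fin n)) {z | z none = φ (fun i => z (some i))}

/-- Weak continuity of a map `ℝ̃ⁿ → ℝ̃ᵐ`. -/
def WeaklyContinuous {n m : ℕ} (φ : (Fin n → R) → (Fin m → R)) : Prop :=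
  ∀ (p : ℤ) (q : ℕ), 0 < q →
    @ContinuousOn _ _ (coefTn (Fin n)) (coefTn (Fin m)) φ {x | ∀ i, x i ∈ Rpq p q}

/-- Weak continuity of a function `ℝ̃ⁿ → ℝ̃`. -/
def WeaklyContinuousFun {n : ℕ} (φ : (Fin n → R) → R) : Prop :=
  ∀ (p : ℤ) (q : ℕ), 0 < q →
    @ContinuousOn _ _ (coefTn (Fin n)) coefT φ {x | ∀ i, x i ∈ Rpq p q}

/-- The constant series `ã ∈ ℝ̃` associated with a real number `a`. -/
def cnst (a : ℝ) : R :=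
  ⟨HahnSeries.C a, 1, one_pos, fun r hr => ⟨0, by
    have h0 : r ∈ ({0} : Set ℚ) :=
      HahnSeries.support_single_subset (by simpa [HahnSeries.C_apply] using hr)
    simp only [Set.mem_singleton_iff] at h0
    simp [h0]⟩⟩

/-- Scalar multiplication of a Puiseux series by a real number. -/
def smulR (c : ℝ) (x : R) : R := cnst c * x

/-- Finite continuity of a map `ℝ̃ⁿ → ℝ̃ᵐ`: continuity (towards the product topologies)
in restriction to every finite-dimensional `ℝ`-linear subspace of `ℝ̃ⁿ`. -/
def FinitelyContinuous {n m : ℕ} (φ : (Fin n → R) → (Fin m → R)) : Prop :=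
  ∀ (k : ℕ) (v : Fin k → (Fin n → R)),
    @ContinuousOn _ _ (coefTn (Fin n)) (coefTn (Fin m)) φ
      {x | ∃ c : Fin k → ℝ, x = fun i => ∑ j, smulR (c j) (v j i)}


/-- Weak continuity of a function `ℝ̃ → ℝ̃` on a subset `S ⊆ ℝ̃`: for every `(p,q)`,
the restriction to `S ∩ ℝ̃_{p,q}` is continuous for the product topologies. -/
def WeaklyContinuousOn1 (φ : R → R) (S : Set R) : Prop :=
  ∀ (p : ℤ) (q : ℕ), 0 < q → @ContinuousOn _ _ coefT coefT φ (S ∩ Rpq p q)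

/-- The absolute value on `ℝ̃`. -/
def pabs (x : R) : R := if ple 0 x then x else -x

/-- `f : ℝ̃ → ℝ̃` has derivative `d` at `x` (the difference quotient converges to `d`
as `h → 0` in the `ℝ̃`-topology, stated in a division-free way). -/
def HasPDerivAt (f : R → R) (x d : R) : Prop :=
  ∀ ε : R, plt 0 ε → ∃ δ : R, plt 0 δ ∧ ∀ h : R,
    ple (pabs h) δ → ple (pabs (f (x + h) - f x - d * h)) (ε * pabs h)

/-- `f : ℝ̃ → ℝ̃` is of class `ℝ̃-C^k` on `U`. For `k = 0` this is `ℝ̃`-continuity on `U`;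
for `k+1`, the derivative exists at every point of `U` and is of class `ℝ̃-C^k` on `U`. -/
def IsCkOn : ℕ → (R → R) → Set R → Prop
  | 0, f, U => @ContinuousOn _ _ ordT ordT f U
  | (k+1), f, U => ∃ f' : R → R, (∀ x ∈ U, HasPDerivAt f x (f' x)) ∧ IsCkOn k f' U

/-- An `ℝ̃`-semialgebraic function `ℝ̃ → ℝ̃`. -/
def IsSAFun1 (φ : R → R) : Prop :=
  IsSA Bool {z | z true = φ (z false)}

private abbrev H : Type := HahnSeries ℚ ℝ

private def ZS (x : H) : Prop := ∀ r ∈ x.support, ∃ i : ℤ, r = (i : ℚ)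

private lemma zs_mul {x y : H} (hx : ZS x) (hy : ZS y) : ZS (x * y) := by
  intro r hr
  obtain ⟨a, ha, b, hb, rfl⟩ := HahnSeries.support_mul_subset hr
  obtain ⟨i, hi⟩ := hx a ha
  obtain ⟨j, hj⟩ := hy b hb
  exact ⟨i + j, by push_cast [hi, hj]; ring⟩

private lemma zs_one : ZS 1 := by
  intro r hr
  have h1 : (1 : H) = HahnSeries.single (0 : ℚ) (1 : ℝ) := rfl
  have := HahnSeries.support_single_subset (h1 ▸ hr)
  simp only [Set.mem_singleton_iff] at this
  exact ⟨0, by simp [this]⟩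

private lemma zs_pow {x : H} (hx : ZS x) (n : ℕ) : ZS (x ^ n) := by
  induction n with
  | zero => simpa using zs_one
  | succ k IH => rw [pow_succ]; exact zs_mul IH hx

private lemma order_eq_zero_of {x : H} (h0 : x.coeff 0 ≠ 0)
    (hnn : ∀ s ∈ x.support, 0 ≤ s) : x.order = 0 := by
  have hx : x ≠ 0 := HahnSeries.ne_zero_of_coeff_ne_zero h0
  exact le_antisymm (HahnSeries.order_le_of_coeff_ne_zero h0)
    (hnn _ ((HahnSeries.mem_support _ _).2 (HahnSeries.coeff_order_eq_zero.not.mpr hx)))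

private lemma zs_root {y : H} (hy : y ≠ 0) (h0 : y.order = 0) {q : ℕ} (hq : 0 < q)
    (hZ : ZS (y ^ q)) : ZS y := by
  by_contra hB
  unfold ZS at hB
  push_neg at hB
  obtain ⟨r0, hr0s, hr0n⟩ := hB
  set B : Set ℚ := {s | s ∈ y.support ∧ ∀ i : ℤ, s ≠ (i : ℚ)} with hBdef
  have hWF : B.IsWF := y.isWF_support.mono (fun s hs => hs.1)
  have hne : B.Nonempty := ⟨r0, hr0s, hr0n⟩
  set r : ℚ := hWF.min hne with hrdef
  have hrB : r ∈ B := hWF.min_mem hne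
  have hmin : ∀ s ∈ B, r ≤ s := fun s hs => le_of_not_gt (hWF.not_lt_min hne hs)
  have hr_supp : r ∈ y.support := hrB.1
  have hrn : ∀ i : ℤ, r ≠ (i : ℚ) := hrB.2
  set c0 : ℝ := y.coeff 0 with hc0def
  have hc0 : c0 ≠ 0 := by rw [hc0def, ← h0]; exact HahnSeries.coeff_order_eq_zero.not.mpr hy
  have hnonneg : ∀ s ∈ y.support, 0 ≤ s := by
    intro s hs
    by_contra hlt
    exact hs (HahnSeries.coeff_eq_zero_of_lt_order (h0 ▸ not_le.mp hlt))
  have hint : ∀ s ∈ y.support, s < r → ∃ i : ℤ, s = (i : ℚ) := by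
    intro s hs hlt
    by_contra hni
    push_neg at hni
    exact absurd (hmin s ⟨hs, hni⟩) (not_le.mpr hlt)
  have hr_pos : 0 < r :=
    lt_of_le_of_ne (hnonneg r hr_supp) (fun h => hrn 0 (by simp [← h]))
  -- supports of powers
  have claim_supp : ∀ k : ℕ, ∀ s ∈ (y ^ k).support,
      0 ≤ s ∧ (s < r → ∃ i : ℤ, s = (i : ℚ)) := by
    intro k
    induction k with
    | zero =>
      intro s hs
      rw [pow_zero] at hs
      have h1 : (1 : H) = HahnSeries.single (0 : ℚ) (1 : ℝ) := rfl
      have := HahnSeries.support_single_subset (h1 ▸ hs)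
      simp only [Set.mem_singleton_iff] at this
      subst this
      exact ⟨le_refl 0, fun _ => ⟨0, by simp⟩⟩
    | succ k IH =>
      intro s hs
      rw [pow_succ] at hs
      obtain ⟨a, ha, b, hb, rfl⟩ := HahnSeries.support_mul_subset hs
      have hA := IH a ha
      have hb0 : 0 ≤ b := hnonneg b hb
      refine ⟨add_nonneg hA.1 hb0, fun hlt => ?_⟩
      have ha' : a < r := lt_of_le_of_lt (le_add_of_nonneg_right hb0) hlt
      have hb' : b < r := lt_of_le_of_lt (le_add_of_nonneg_left hA.1) hlt
      obtain ⟨i, hi⟩ := hA.2 ha'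
      obtain ⟨j, hj⟩ := hint b hb hb'
      exact ⟨i + j, by push_cast [hi, hj]; ring⟩
  have claim_c0 : ∀ k : ℕ, (y ^ k).coeff 0 = c0 ^ k := by
    intro k
    induction k with
    | zero => simp
    | succ k IH =>
      have h := HahnSeries.coeff_mul_order_add_order (y ^ k) y
      rw [HahnSeries.leadingCoeff_eq, HahnSeries.leadingCoeff_eq,
        HahnSeries.order_pow, h0, smul_zero, add_zero] at h
      rw [pow_succ, h, IH, pow_succ]
  have claim_r : ∀ k : ℕ, (y ^ (k + 1)).coeff r = ((k : ℝ) + 1) * c0 ^ k * y.coeff r := by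
    intro k
    induction k with
    | zero => simp
    | succ k IH =>
      have hsub : Finset.antidiagonal (y ^ (k + 1)).isPWO_support y.isPWO_support r ⊆
          {((0 : ℚ), r), (r, (0 : ℚ))} := by
        rintro ⟨a, b⟩ hab
        rw [Finset.mem_addAntidiagonal] at hab
        obtain ⟨ha, hb, habr⟩ := hab
        have ha0 : 0 ≤ a := (claim_supp _ a ha).1
        have hb0 : 0 ≤ b := hnonneg b hb
        simp only [Finset.mem_insert, Finset.mem_singleton, Prod.mk.injEq]
        by_cases hbi : ∃ i : ℤ, b = (i : ℚ)
        · have har : a = r := by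
            by_contra hane
            have halt : a < r := lt_of_le_of_ne (by linarith) hane
            obtain ⟨j, hj⟩ := (claim_supp _ a ha).2 halt
            obtain ⟨i, hi⟩ := hbi
            exact hrn (j + i) (by push_cast [← habr, hj, hi]; ring)
          exact Or.inr ⟨har, by linarith⟩
        · push_neg at hbi
          have hbr : r ≤ b := hmin b ⟨hb, hbi⟩
          have hb' : b = r := le_antisymm (by linarith) hbr
          exact Or.inl ⟨by linarith, hb'⟩
      have hpairne : ((0 : ℚ), r) ≠ (r, (0 : ℚ)) := by
        simp [Prod.ext_iff, hr_pos.ne']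
      have : (y ^ (k + 1 + 1)).coeff r =
          (y ^ (k + 1)).coeff 0 * y.coeff r + (y ^ (k + 1)).coeff r * y.coeff 0 := by
        rw [pow_succ, HahnSeries.coeff_mul, Finset.sum_subset hsub, Finset.sum_pair hpairne]
        intro x hx hnx
        rw [Finset.mem_addAntidiagonal] at hnx
        push_neg at hnx
        simp only [Finset.mem_insert, Finset.mem_singleton] at hx
        rcases hx with rfl | rfl
        · by_cases h1 : (y ^ (k + 1)).coeff 0 = 0
          · simp [h1]
          · have h2 : y.coeff r = 0 := by
              by_contra h2
              exact hnx ((HahnSeries.mem_support _ _).2 h1)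
                ((HahnSeries.mem_support _ _).2 h2) (by simp)
            simp [h2]
        · by_cases h1 : (y ^ (k + 1)).coeff r = 0
          · simp [h1]
          · have h2 : y.coeff 0 = 0 := by
              by_contra h2
              exact hnx ((HahnSeries.mem_support _ _).2 h1)
                ((HahnSeries.mem_support _ _).2 h2) (by simp)
            simp [h2]
      rw [this, claim_c0 (k + 1), IH, ← hc0def]
      push_cast
      ring
  -- conclude
  obtain ⟨k, rfl⟩ : ∃ k, q = k + 1 := ⟨q - 1, (Nat.succ_pred_eq_of_pos hq).symm⟩
  have h := claim_r k
  have hcoeff0 : (y ^ (k + 1)).coeff r = 0 := by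
    by_contra hne'
    obtain ⟨i, hi⟩ := hZ r ((HahnSeries.mem_support _ _).2 hne')
    exact hrn i hi
  rw [hcoeff0] at h
  have hk : ((k : ℝ) + 1) ≠ 0 := by positivity
  have hyr : y.coeff r = 0 :=
    (mul_eq_zero.mp h.symm).resolve_left (mul_ne_zero hk (pow_ne_zero _ hc0))
  exact hr_supp hyr


private lemma Tmem : IsPuiseux (HahnSeries.single (1 : ℚ) (1 : ℝ)) := by
  refine ⟨1, one_pos, fun r hr => ⟨1, ?_⟩⟩
  have := HahnSeries.support_single_subset hr
  simp only [Set.mem_singleton_iff] at this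
  simp [this]

private def Tser : R := ⟨HahnSeries.single (1 : ℚ) (1 : ℝ), Tmem⟩

private def iota : R → ℚ → ℝ := fun x r => (x : H).coeff r

/-- Example `ex-simple`. Let `p, q ∈ ℕ*` and let `φ` send each
`γ ≥ 0` in `ℝ̃` to `γ^{p/q}`, i.e. `φ γ ≥ 0` and `(φ γ)^q = γ^p` for `γ ≥ 0`.
If `φ` is weakly continuous on `{γ ≥ 0}`, then `q` divides `p`. -/
theorem statement4 (p q : ℕ) (hp : 0 < p) (hq : 0 < q) (φ : R → R)
    (hroot : ∀ γ : R, ple 0 γ → ple 0 (φ γ) ∧ (φ γ) ^ q = γ ^ p)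
    (hw : WeaklyContinuousOn1 φ {γ : R | ple 0 γ}) :
    q ∣ p := by
  by_contra hdvd
  have hq' : (q : ℚ) ≠ 0 := by exact_mod_cast hq.ne'
  have hTc : ((Tser : R) : H) = HahnSeries.single (1 : ℚ) (1 : ℝ) := rfl
  have hple : ∀ x : R, (∃ r : ℚ, 0 < (x : H).coeff r ∧ ∀ s < r, (x : H).coeff s = 0) →
      ple 0 x := by
    intro x hx
    right
    show Pos ((x : H) - ((0 : R) : H))
    rw [ZeroMemClass.coe_zero, sub_zero]
    exact hx
  have hT0 : ple 0 Tser := by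
    refine hple _ ⟨1, ?_, fun s hs => ?_⟩
    · rw [hTc]; simp
    · rw [hTc]; exact HahnSeries.coeff_single_of_ne (ne_of_lt hs)
  have hGc : ∀ c : ℝ, ((cnst c + Tser : R) : H) =
      HahnSeries.C c + HahnSeries.single (1 : ℚ) (1 : ℝ) := fun _ => rfl
  have hsupp01 : ∀ c : ℝ, ∀ s ∈ (HahnSeries.C c + HahnSeries.single (1 : ℚ) (1 : ℝ)).support,
      s = 0 ∨ s = 1 := by
    intro c s hs
    by_contra hss
    push_neg at hss
    apply hs
    simp [HahnSeries.coeff_add, HahnSeries.C_apply,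
      HahnSeries.coeff_single_of_ne hss.1, HahnSeries.coeff_single_of_ne hss.2]
  have hGpos : ∀ c : ℝ, 0 < c → ple 0 (cnst c + Tser) := by
    intro c hc
    refine hple _ ⟨0, ?_, fun s hs => ?_⟩
    · rw [hGc]
      simpa [HahnSeries.coeff_add, HahnSeries.C_apply, HahnSeries.coeff_single_same,
        HahnSeries.coeff_single_of_ne (by norm_num : (0 : ℚ) ≠ 1)] using hc
    · rw [hGc]
      simp [HahnSeries.coeff_add, HahnSeries.C_apply,
        HahnSeries.coeff_single_of_ne (ne_of_lt hs),
        HahnSeries.coeff_single_of_ne (ne_of_lt (lt_trans hs one_pos))]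
  have hpow : ∀ γ : R, ple 0 γ → ((φ γ : R) : H) ^ q = ((γ : R) : H) ^ p := by
    intro γ hγ
    have h := congrArg Subtype.val (hroot γ hγ).2
    push_cast at h
    exact h
  -- Step 1 : the coefficient of φ(t) at p/q is nonzero
  have h1 : ((φ Tser : R) : H) ^ q = HahnSeries.single ((p : ℚ)) 1 := by
    rw [hpow Tser hT0, hTc, HahnSeries.single_pow]
    norm_num
  have hY0 : ((φ Tser : R) : H) ≠ 0 := by
    intro h
    rw [h, zero_pow hq.ne'] at h1
    exact (HahnSeries.single_ne_zero one_ne_zero) h1.symm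
  have horder : ((φ Tser : R) : H).order = (p : ℚ) / (q : ℚ) := by
    have h2 := HahnSeries.order_pow ((φ Tser : R) : H) q
    rw [h1, HahnSeries.order_single one_ne_zero, nsmul_eq_mul] at h2
    rw [eq_div_iff hq']
    linarith
  have hcoeffT : iota (φ Tser) ((p : ℚ) / (q : ℚ)) ≠ 0 := by
    show ((φ Tser : R) : H).coeff ((p : ℚ) / (q : ℚ)) ≠ 0
    rw [← horder]
    exact HahnSeries.coeff_order_eq_zero.not.mpr hY0
  -- Step 2 : the coefficient of φ(c + t) at p/q is zero, for c > 0
  have hstep2 : ∀ c : ℝ, 0 < c → iota (φ (cnst c + Tser)) ((p : ℚ) / (q : ℚ)) = 0 := by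
    intro c hc
    set w : H := HahnSeries.C c + HahnSeries.single (1 : ℚ) (1 : ℝ) with hwdef
    have hw0 : w.coeff 0 = c := by
      simp [hwdef, HahnSeries.coeff_add, HahnSeries.C_apply, HahnSeries.coeff_single_same,
        HahnSeries.coeff_single_of_ne (by norm_num : (0 : ℚ) ≠ 1)]
    have hwne : w ≠ 0 := HahnSeries.ne_zero_of_coeff_ne_zero (by rw [hw0]; exact hc.ne')
    have hworder : w.order = 0 := by
      refine order_eq_zero_of (by rw [hw0]; exact hc.ne') (fun s hs => ?_)
      rcases hsupp01 c s hs with rfl | rfl <;> norm_num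
    have hYq : ((φ (cnst c + Tser) : R) : H) ^ q = w ^ p := by
      rw [hpow _ (hGpos c hc), hGc]
    have hY : ((φ (cnst c + Tser) : R) : H) ≠ 0 := by
      intro h
      rw [h, zero_pow hq.ne'] at hYq
      exact pow_ne_zero p hwne hYq.symm
    have hYord : ((φ (cnst c + Tser) : R) : H).order = 0 := by
      have h2 := HahnSeries.order_pow ((φ (cnst c + Tser) : R) : H) q
      rw [hYq, HahnSeries.order_pow, hworder, smul_zero, nsmul_eq_mul] at h2
      exact (mul_eq_zero.mp h2.symm).resolve_left hq'
    have hZS : ZS (((φ (cnst c + Tser) : R) : H)) := by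
      apply zs_root hY hYord hq
      rw [hYq]
      apply zs_pow
      intro s hs
      rcases hsupp01 c s hs with rfl | rfl
      · exact ⟨0, by norm_num⟩
      · exact ⟨1, by norm_num⟩
    by_contra hne
    obtain ⟨i, hi⟩ := hZS _ ((HahnSeries.mem_support _ _).2 hne)
    apply hdvd
    rw [div_eq_iff hq'] at hi
    have hzint : (p : ℤ) = i * q := by exact_mod_cast hi
    exact Int.natCast_dvd_natCast.mp ⟨i, by rw [hzint]; ring⟩
  -- Step 3 : weak continuity gives a contradiction
  have hTS : Tser ∈ ({γ : R | ple 0 γ} ∩ Rpq 0 1) := by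
    refine ⟨hT0, fun r hr => ?_⟩
    have hr' := hTc ▸ hr
    have := HahnSeries.support_single_subset hr'
    simp only [Set.mem_singleton_iff] at this
    exact ⟨1, by norm_num, by norm_num [this]⟩
  have hGS : ∀ c : ℝ, c ∈ Set.Ioi (0 : ℝ) → (cnst c + Tser : R) ∈
      ({γ : R | ple 0 γ} ∩ Rpq 0 1) := by
    intro c hc
    refine ⟨hGpos c hc, fun r hr => ?_⟩
    have hr' := (hGc c) ▸ hr
    rcases hsupp01 c r hr' with rfl | rfl
    · exact ⟨0, le_refl 0, by norm_num⟩
    · exact ⟨1, by norm_num, by norm_num⟩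
  have hcont : Filter.Tendsto φ
      (@nhdsWithin R coefT Tser ({γ : R | ple 0 γ} ∩ Rpq 0 1)) (@nhds R coefT (φ Tser)) :=
    hw 0 1 one_pos Tser hTS
  have hnhds : ∀ x : R, @nhds R coefT x = Filter.comap iota (nhds (iota x)) :=
    fun x => nhds_induced iota x
  have htendG : Filter.Tendsto (fun c : ℝ => (cnst c + Tser : R)) (nhdsWithin 0 (Set.Ioi 0))
      (@nhdsWithin R coefT Tser ({γ : R | ple 0 γ} ∩ Rpq 0 1)) := by
    refine @tendsto_nhdsWithin_of_tendsto_nhds_of_eventually_within R ℝ coefT _ _ _ _ ?_ ?_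
    · rw [hnhds Tser, Filter.tendsto_comap_iff]
      rw [tendsto_pi_nhds]
      intro r
      have hkey : Filter.Tendsto (fun c : ℝ => (HahnSeries.C c).coeff r)
          (nhdsWithin 0 (Set.Ioi 0)) (nhds 0) := by
        by_cases hr0 : r = 0
        · subst hr0
          simp only [HahnSeries.C_apply, HahnSeries.coeff_single_same]
          exact Filter.Tendsto.mono_left Filter.tendsto_id nhdsWithin_le_nhds
        · simp only [HahnSeries.C_apply, HahnSeries.coeff_single_of_ne hr0]
          exact tendsto_const_nhds
      have h2 := hkey.add
        (tendsto_const_nhds (x := (HahnSeries.single (1 : ℚ) (1 : ℝ)).coeff r)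
          (f := nhdsWithin (0:ℝ) (Set.Ioi 0)))
      rw [zero_add] at h2
      exact h2.congr (fun c => rfl)
    · filter_upwards [self_mem_nhdsWithin] with c hc using hGS c hc
  have h2 : Filter.Tendsto (fun c : ℝ => φ (cnst c + Tser)) (nhdsWithin 0 (Set.Ioi 0))
      (@nhds R coefT (φ Tser)) := Filter.Tendsto.comp hcont htendG
  rw [hnhds (φ Tser), Filter.tendsto_comap_iff] at h2
  have h3 : Filter.Tendsto (fun c : ℝ => iota (φ (cnst c + Tser)) ((p : ℚ) / (q : ℚ)))
      (nhdsWithin 0 (Set.Ioi 0)) (nhds (iota (φ Tser) ((p : ℚ) / (q : ℚ)))) :=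
    ((continuous_apply ((p : ℚ) / (q : ℚ))).tendsto _).comp h2
  have heq : (fun c : ℝ => iota (φ (cnst c + Tser)) ((p : ℚ) / (q : ℚ)))
      =ᶠ[nhdsWithin (0:ℝ) (Set.Ioi 0)] (fun _ => (0 : ℝ)) := by
    filter_upwards [self_mem_nhdsWithin] with c hc using hstep2 c hc
  have h5 := Filter.Tendsto.congr' heq h3
  exact hcoeffT (tendsto_nhds_unique h5 tendsto_const_nhds)


end Puiseux
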